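/- arXiv:2105.13883 — 2 statements merged into one kernel-verified Lean document; each statement's English description precedes it below -/
import Mathlib

section
/- Let P_1,…,P_s ∈ ℤ[x_1,…,x_r] (s ≥ 2, r ≥ 1) be nonzero coprime polynomials. If d_{n_0} = 1 for some n_0 ∈ ℤ^r, then the set {n ∈ ℤ^r : d_n = 1} is Zariski-dense in ℤ^r: for every nonzero polynomial Q ∈ ℚ[x_1,…,x_r] there exists n ∈ ℤ^r with d_n = 1 and Q(n) ≠ 0. -/
open MvPolynomial
namespace Stmt16Aux
noncomputable section


/-! ### Generic helpers -/

lemma isRelPrime_of_ringEquiv {R S : Type*} [CommRing R] [CommRing S] (e : R ≃+* S)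
    {a b : R} (h : IsRelPrime a b) : IsRelPrime (e a) (e b) := by
  intro d hd1 hd2
  have h1 : e.symm d ∣ a := by simpa using map_dvd e.symm hd1
  have h2 : e.symm d ∣ b := by simpa using map_dvd e.symm hd2
  have := (h h1 h2).map e
  simpa using this

lemma isCoprime_of_isRelPrime {K : Type*} [Field K] {f g : Polynomial K}
    (h : IsRelPrime f g) : IsCoprime f g := by
  classical
  exact EuclideanDomain.gcd_isUnit_iff.mp
    (h (EuclideanDomain.gcd_dvd_left f g) (EuclideanDomain.gcd_dvd_right f g))

lemma eq_C_of_totalDegree_eq_zero {σ R : Type*} [CommSemiring R] {p : MvPolynomial σ R}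
    (h : p.totalDegree = 0) : p = C (coeff 0 p) := by
  classical
  ext m
  by_cases hm : m = 0
  · subst hm; simp
  · rw [coeff_C, if_neg (Ne.symm hm)]
    by_contra hc
    have hmem : m ∈ p.support := by simpa [mem_support_iff] using hc
    have hz := (totalDegree_eq_zero_iff σ p).mp h m hmem
    exact hm (Finsupp.ext hz)

lemma not_prime_of_totalDegree_eq_zero {σ : Type*} {q : MvPolynomial σ ℚ}
    (hq : Prime q) (h : q.totalDegree = 0) : False := by
  have hC := eq_C_of_totalDegree_eq_zero h
  have h0 : coeff 0 q ≠ 0 := by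
    intro h0; rw [h0, map_zero] at hC; exact hq.ne_zero hC
  exact hq.not_unit (hC ▸ (IsUnit.mk0 _ h0).map (C : ℚ →+* MvPolynomial σ ℚ))

lemma isPrimitive_dvd_of_dvd_C_mul {D : Type*} [CommRing D] [IsDomain D]
    [StrongNormalizedGCDMonoid D]
    {g a : Polynomial D} (hg : g.IsPrimitive) {m : D} (hm : m ≠ 0)
    (h : g ∣ Polynomial.C m * a) : g ∣ a := by
  obtain ⟨h₂, hh⟩ := h
  have hcont : normalize m * a.content = h₂.content := by
    have hc := congrArg Polynomial.content hh
    rwa [Polynomial.content_C_mul, Polynomial.content_mul,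
      hg.content_eq_one, one_mul] at hc
  have hdvd : Polynomial.C m ∣ h₂ := by
    have h1 : Polynomial.C (normalize m) ∣ h₂ :=
      dvd_trans (map_dvd Polynomial.C ⟨a.content, hcont.symm⟩) h₂.C_content_dvd
    exact dvd_trans (map_dvd Polynomial.C (associated_normalize m).dvd) h1
  obtain ⟨h₃, rfl⟩ := hdvd
  refine ⟨h₃, ?_⟩
  have hC : (Polynomial.C m : Polynomial D) ≠ 0 := by
    simpa using hm
  apply mul_left_cancel₀ hC
  rw [hh]; ring

lemma exists_bezout {D : Type*} [CommRing D] [IsDomain D] [UniqueFactorizationMonoid D]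
    {a b : Polynomial D} (hab : IsRelPrime a b) (ha : a ≠ 0) :
    ∃ (m : D) (U V : Polynomial D), m ≠ 0 ∧ U * a + V * b = Polynomial.C m := by
  classical
  letI := UniqueFactorizationMonoid.strongNormalizationMonoid (α := D)
  letI := UniqueFactorizationMonoid.toStrongNormalizedGCDMonoid D
  set F := FractionRing D
  set ι : D →+* F := algebraMap D F with hι
  have hinj : Function.Injective ι := IsFractionRing.injective D F
  have hsmul : ∀ (r : D) (q : Polynomial F), r • q = Polynomial.C (ι r) * q := by
    intro r q
    rw [← IsScalarTower.algebraMap_smul F r q, Polynomial.smul_eq_C_mul]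
  -- clearing denominators for a divisor of a mapped polynomial
  have clear : ∀ {δ : Polynomial F} {c : Polynomial D}, δ ∣ c.map ι →
      ∃ (w : D) (e' : Polynomial D), w ≠ 0 ∧
        (IsLocalization.integerNormalization (nonZeroDivisors D) δ) * e' =
          Polynomial.C w * c := by
    intro δ c hdvd
    obtain ⟨e, he⟩ := hdvd
    obtain ⟨t, ht⟩ :=
      IsLocalization.integerNormalization_map_to_map (nonZeroDivisors D) δ
    obtain ⟨te, hte⟩ :=
      IsLocalization.integerNormalization_map_to_map (nonZeroDivisors D) e
    refine ⟨(t : D) * (te : D),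
      IsLocalization.integerNormalization (nonZeroDivisors D) e,
      mul_ne_zero (nonZeroDivisors.coe_ne_zero t) (nonZeroDivisors.coe_ne_zero te), ?_⟩
    apply Polynomial.map_injective ι hinj
    rw [Polynomial.map_mul, ht, hte, Polynomial.map_mul, Polynomial.map_C, hsmul, hsmul,
      map_mul ι, map_mul Polynomial.C, he]
    ring
  have haF0 : a.map ι ≠ 0 := by
    simpa [Polynomial.map_eq_zero_iff hinj] using ha
  have hgcd : IsUnit (EuclideanDomain.gcd (a.map ι) (b.map ι)) := by
    by_contra hu
    set δ := EuclideanDomain.gcd (a.map ι) (b.map ι) with hδ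
    have hδa : δ ∣ a.map ι := EuclideanDomain.gcd_dvd_left _ _
    have hδb : δ ∣ b.map ι := EuclideanDomain.gcd_dvd_right _ _
    have hδ0 : δ ≠ 0 := fun h => haF0 (zero_dvd_iff.mp (h ▸ hδa))
    set δ' := IsLocalization.integerNormalization (nonZeroDivisors D) δ with hδ'
    obtain ⟨w₁, e₁, hw₁, he₁⟩ := clear hδa
    obtain ⟨w₂, e₂, hw₂, he₂⟩ := clear hδb
    set g := δ'.primPart with hg
    have hga : g ∣ a :=
      isPrimitive_dvd_of_dvd_C_mul δ'.isPrimitive_primPart hw₁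
        (he₁ ▸ (δ'.primPart_dvd.trans ⟨e₁, rfl⟩))
    have hgb : g ∣ b :=
      isPrimitive_dvd_of_dvd_C_mul δ'.isPrimitive_primPart hw₂
        (he₂ ▸ (δ'.primPart_dvd.trans ⟨e₂, rfl⟩))
    have hgu : IsUnit g := hab hga hgb
    -- but g has positive degree
    obtain ⟨t, ht⟩ :=
      IsLocalization.integerNormalization_map_to_map (nonZeroDivisors D) δ
    have hδdeg : δ.natDegree ≠ 0 := by
      intro h0
      obtain ⟨x, hx⟩ := Polynomial.natDegree_eq_zero.mp h0
      rcases eq_or_ne x 0 with rfl | hx0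
      · simp at hx; exact hδ0 hx.symm
      · exact hu (hx ▸ Polynomial.isUnit_C.mpr (IsUnit.mk0 x hx0))
    have hδ'deg : δ'.natDegree = δ.natDegree := by
      have h1 : (δ'.map ι).natDegree = δ'.natDegree :=
        Polynomial.natDegree_map_eq_of_injective hinj δ'
      rw [ht, hsmul] at h1
      have hι0 : ι (t : D) ≠ 0 := fun h =>
        nonZeroDivisors.coe_ne_zero t (hinj (by simpa using h))
      rw [Polynomial.natDegree_C_mul hι0] at h1
      exact h1.symm
    have : g.natDegree = 0 := Polynomial.natDegree_eq_zero_of_isUnit hgu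
    rw [hg, Polynomial.natDegree_primPart, hδ'deg] at this
    exact hδdeg this
  have hco : IsCoprime (a.map ι) (b.map ι) := EuclideanDomain.gcd_isUnit_iff.mp hgcd
  obtain ⟨U₁, V₁, hUV⟩ := hco
  obtain ⟨s₁, hs₁⟩ :=
    IsLocalization.integerNormalization_map_to_map (nonZeroDivisors D) U₁
  obtain ⟨s₂, hs₂⟩ :=
    IsLocalization.integerNormalization_map_to_map (nonZeroDivisors D) V₁
  refine ⟨(s₁ : D) * (s₂ : D),
    (IsLocalization.integerNormalization (nonZeroDivisors D) U₁) * Polynomial.C (s₂ : D),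
    (IsLocalization.integerNormalization (nonZeroDivisors D) V₁) * Polynomial.C (s₁ : D),
    mul_ne_zero (nonZeroDivisors.coe_ne_zero s₁) (nonZeroDivisors.coe_ne_zero s₂), ?_⟩
  apply Polynomial.map_injective ι hinj
  rw [Polynomial.map_add, Polynomial.map_mul, Polynomial.map_mul, Polynomial.map_mul,
    Polynomial.map_mul, hs₁, hs₂, Polynomial.map_C, Polynomial.map_C, Polynomial.map_C,
    hsmul, hsmul, map_mul ι, map_mul Polynomial.C]
  linear_combination (Polynomial.C (ι (s₁ : D)) * Polynomial.C (ι (s₂ : D))) * hUV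


/-- Substitute `x j ↦ p j + c j * X` to restrict to a line. -/
def lineComp {m : ℕ} (p : Fin m → ℚ) (c : Fin m → ℤ) :
    MvPolynomial (Fin m) ℚ →ₐ[ℚ] Polynomial ℚ :=
  aeval fun j => Polynomial.C (p j) + Polynomial.C ((c j : ℚ)) * Polynomial.X

lemma eval_lineComp {m : ℕ} (p : Fin m → ℚ) (c : Fin m → ℤ)
    (F : MvPolynomial (Fin m) ℚ) (t : ℚ) :
    (lineComp p c F).eval t = eval (fun j => p j + t * (c j : ℚ)) F := by
  have h : (Polynomial.evalRingHom t).comp (lineComp p c).toRingHom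
      = (eval fun j => p j + t * (c j : ℚ)) := by
    apply ringHom_ext
    · intro a; simp [lineComp]
    · intro j; simp [lineComp]; ring
  exact RingHom.congr_fun h F

section Step

variable {k : ℕ}

/-- The image of the line parameter in one fewer variable. -/
def beta (p : Fin (k + 2) → ℚ) (c : ℤ) : MvPolynomial (Fin (k + 1)) ℚ :=
  C (p 0) + (c : MvPolynomial (Fin (k + 1)) ℚ) * (X 0 - C (p (Fin.succ 0)))

/-- Substitute variable `0` by an affine function of the remaining variable `0`. -/
def subst (p : Fin (k + 2) → ℚ) (c : ℤ) (F : MvPolynomial (Fin (k + 2)) ℚ) :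
    MvPolynomial (Fin (k + 1)) ℚ :=
  Polynomial.eval (beta p c) (finSuccEquiv ℚ (k + 1) F)

/-- `subst` as a ring hom. -/
def substHom (p : Fin (k + 2) → ℚ) (c : ℤ) :
    MvPolynomial (Fin (k + 2)) ℚ →+* MvPolynomial (Fin (k + 1)) ℚ :=
  (Polynomial.evalRingHom (beta p c)).comp
    ((finSuccEquiv ℚ (k + 1)).toAlgHom.toRingHom)

lemma substHom_apply (p : Fin (k + 2) → ℚ) (c : ℤ) (F : MvPolynomial (Fin (k + 2)) ℚ) :
    substHom p c F = subst p c F := rfl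

lemma eval_subst (p : Fin (k + 2) → ℚ) (c : ℤ) (F : MvPolynomial (Fin (k + 2)) ℚ) :
    eval (p ∘ Fin.succ) (subst p c F) = eval p F := by
  have h : (eval (p ∘ Fin.succ)).comp (substHom p c) = eval p := by
    apply ringHom_ext
    · intro a
      simp [substHom, finSuccEquiv_apply]
    · intro j
      refine Fin.cases ?_ (fun i => ?_) j
      · simp [substHom, beta, finSuccEquiv_X_zero, Function.comp]
      · simp [substHom, finSuccEquiv_X_succ, Function.comp]
  exact RingHom.congr_fun h F

lemma lineComp_subst (p : Fin (k + 2) → ℚ) (c : ℤ) (c' : Fin (k + 1) → ℤ)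
    (F : MvPolynomial (Fin (k + 2)) ℚ) :
    lineComp (p ∘ Fin.succ) c' (subst p c F)
      = lineComp p (Fin.cases (c * c' 0) c') F := by
  have h : (lineComp (p ∘ Fin.succ) c').toRingHom.comp (substHom p c)
      = (lineComp p (Fin.cases (c * c' 0) c')).toRingHom := by
    apply ringHom_ext
    · intro a
      simp [substHom, lineComp, finSuccEquiv_apply]
    · intro j
      refine Fin.cases ?_ (fun i => ?_) j
      · simp [substHom, beta, lineComp, finSuccEquiv_X_zero, Function.comp]
        push_cast
        ring
      · simp [substHom, lineComp, finSuccEquiv_X_succ, Function.comp]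
  exact RingHom.congr_fun h F

/-- Any prime divisor of `X 0 - C v` vanishes at any point whose first coordinate is `v`. -/
lemma eval_eq_zero_of_dvd_X_sub_C (p' : Fin (k + 1) → ℚ)
    {q : MvPolynomial (Fin (k + 1)) ℚ} (hq : Prime q)
    (hdvd : q ∣ X 0 - C (p' 0)) : eval p' q = 0 := by
  obtain ⟨w, hw⟩ := hdvd
  set E' := finSuccEquiv ℚ k with hE'
  have hγ' : E' (X 0 - C (p' 0)) = Polynomial.X - Polynomial.C (C (p' 0)) := by
    simp [hE', finSuccEquiv_apply]
  have hEw := congrArg E' hw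
  rw [map_mul, hγ'] at hEw
  have hq0 : E' q ≠ 0 := fun h => hq.ne_zero (by
    have := congrArg E'.symm h; simpa using this)
  have hw0 : E' w ≠ 0 := by
    intro h
    rw [h, mul_zero] at hEw
    exact Polynomial.X_sub_C_ne_zero _ hEw
  have hdeg : (E' q).natDegree + (E' w).natDegree = 1 := by
    rw [← Polynomial.natDegree_mul hq0 hw0, ← hEw, Polynomial.natDegree_X_sub_C]
  rcases Nat.eq_zero_or_pos (E' q).natDegree with h0 | hpos
  · -- q would be a unit: contradiction
    exfalso
    obtain ⟨x, hx⟩ := Polynomial.natDegree_eq_zero.mp h0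
    have hcoeff : x * (E' w).coeff 1 = 1 := by
      have := congrArg (fun P => Polynomial.coeff P 1) hEw
      simpa [← hx, Polynomial.coeff_C_mul] using this.symm
    have hux : IsUnit x := IsUnit.of_mul_eq_one _ hcoeff
    have : IsUnit (E' q) := hx ▸ Polynomial.isUnit_C.mpr hux
    have : IsUnit q := by
      have h2 := this.map E'.symm.toRingHom
      simpa using h2
    exact hq.not_unit this
  · -- w is a unit
    have hw1 : (E' w).natDegree = 0 := by omega
    obtain ⟨x, hx⟩ := Polynomial.natDegree_eq_zero.mp hw1
    have hcoeff : (E' q).coeff 1 * x = 1 := by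
      have := congrArg (fun P => Polynomial.coeff P 1) hEw
      simpa [← hx, Polynomial.coeff_mul_C] using this.symm
    have hux : IsUnit x := IsUnit.of_mul_eq_one ((E' q).coeff 1) (by linear_combination hcoeff)
    have huw : IsUnit w := by
      have : IsUnit (E' w) := hx ▸ Polynomial.isUnit_C.mpr hux
      have h2 := this.map E'.symm.toRingHom
      simpa using h2
    have hevw : eval p' w ≠ 0 := by
      obtain ⟨w', hw'⟩ := huw.exists_right_inv
      intro h
      have := congrArg (eval p') hw'
      rw [map_mul, h, zero_mul, map_one] at this
      exact zero_ne_one this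
    have h0 : eval p' q * eval p' w = 0 := by
      rw [← map_mul, ← hw]; simp
    rcases mul_eq_zero.mp h0 with h | h
    · exact h
    · exact absurd h hevw

end Step
lemma exists_good_c {k : ℕ} (p : Fin (k + 2) → ℚ) (A B Q : MvPolynomial (Fin (k + 2)) ℚ)
    (hAB : IsRelPrime A B) (hA : eval p A ≠ 0) (hQ : Q ≠ 0) :
    ∃ c : ℤ, IsRelPrime (subst p c A) (subst p c B) ∧ subst p c Q ≠ 0 := by
  classical
  set E := finSuccEquiv ℚ (k + 1) with hE
  set γ : MvPolynomial (Fin (k + 1)) ℚ := X 0 - C (p (Fin.succ 0)) with hγ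
  have hA0 : A ≠ 0 := fun h => hA (by simp [h])
  have hQE : E Q ≠ 0 := by
    intro h; apply hQ; have := congrArg E.symm h; simpa using this
  have haE : E A ≠ 0 := by
    intro h; apply hA0; have := congrArg E.symm h; simpa using this
  have hab : IsRelPrime (E A) (E B) := isRelPrime_of_ringEquiv E.toRingEquiv hAB
  obtain ⟨m₀, U, V, hm₀, hUV⟩ := exists_bezout hab haE
  have hBez : ∀ c : ℤ, Polynomial.eval (beta p c) U * subst p c A
      + Polynomial.eval (beta p c) V * subst p c B = m₀ := by
    intro c
    have h := congrArg (Polynomial.eval (beta p c)) hUV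
    simpa [subst] using h
  have hγ0 : γ ≠ 0 := by
    intro h
    have h2 : finSuccEquiv ℚ k γ = Polynomial.X - Polynomial.C (C (p (Fin.succ 0))) := by
      simp [hγ, finSuccEquiv_apply]
    rw [h, map_zero] at h2
    exact Polynomial.X_sub_C_ne_zero _ h2.symm
  have hβdiff : ∀ c c' : ℤ, beta p c - beta p c'
      = ((c - c' : ℤ) : MvPolynomial (Fin (k + 1)) ℚ) * γ := by
    intro c c'; simp only [beta, hγ]; push_cast; ring
  have hβinj : Function.Injective (fun c : ℤ => beta p c) := by
    intro c c' h
    have h2 : ((c - c' : ℤ) : MvPolynomial (Fin (k + 1)) ℚ) * γ = 0 := by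
      rw [← hβdiff]
      simp only at h
      rw [h, sub_self]
    rcases mul_eq_zero.mp h2 with h3 | h3
    · have h4 : C (((c - c' : ℤ) : ℚ)) = (0 : MvPolynomial (Fin (k + 1)) ℚ) := by
        rw [map_intCast (C : ℚ →+* MvPolynomial (Fin (k + 1)) ℚ) (c - c')]
        exact h3
      have h5 : ((c - c' : ℤ) : ℚ) = 0 := C_injective _ ℚ (by simpa using h4)
      have h6 : c - c' = 0 := by exact_mod_cast h5
      omega
    · exact absurd h3 hγ0
  have hfinQ : {c : ℤ | subst p c Q = 0}.Finite := by
    have hroot : {x : MvPolynomial (Fin (k + 1)) ℚ | (E Q).IsRoot x}.Finite :=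
      Polynomial.finite_setOf_isRoot hQE
    refine Set.Finite.subset (hroot.preimage hβinj.injOn) ?_
    intro c hc
    simp only [Set.mem_setOf_eq] at hc
    exact hc
  have hSfin : ∀ q ∈ (UniqueFactorizationMonoid.factors m₀).toFinset,
      {c : ℤ | q ∣ subst p c A ∧ q ∣ subst p c B}.Finite := by
    intro q hqf
    have hqirr : Irreducible q :=
      UniqueFactorizationMonoid.irreducible_of_factor q (Multiset.mem_toFinset.mp hqf)
    have hqpr : Prime q := UniqueFactorizationMonoid.irreducible_iff_prime.mp hqirr
    by_cases hγq : q ∣ γ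
    · refine Set.Finite.subset Set.finite_empty ?_
      rintro c ⟨h1, -⟩
      exfalso
      rw [hγ] at hγq
      have hev : eval (p ∘ Fin.succ) q = 0 :=
        eval_eq_zero_of_dvd_X_sub_C (p ∘ Fin.succ) hqpr hγq
      obtain ⟨w, hw⟩ := h1
      apply hA
      rw [← eval_subst p c A, hw, map_mul, hev, zero_mul]
    · set I := Ideal.span {q} with hI
      haveI hIp : I.IsPrime := (Ideal.span_singleton_prime hqpr.ne_zero).mpr hqpr
      haveI : Nontrivial (MvPolynomial (Fin (k + 1)) ℚ ⧸ I) :=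
        Ideal.Quotient.nontrivial_iff.mpr hIp.ne_top
      haveI : CharZero (MvPolynomial (Fin (k + 1)) ℚ ⧸ I) :=
        charZero_of_injective_algebraMap
          ((algebraMap ℚ (MvPolynomial (Fin (k + 1)) ℚ ⧸ I)).injective)
      set φ : MvPolynomial (Fin (k + 1)) ℚ →+* MvPolynomial (Fin (k + 1)) ℚ ⧸ I :=
        Ideal.Quotient.mk I with hφ
      have hdvd0 : ∀ x, q ∣ x ↔ φ x = 0 := fun x => by
        rw [hφ, Ideal.Quotient.eq_zero_iff_mem, hI, Ideal.mem_span_singleton]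
      have hφγ : φ γ ≠ 0 := fun h => hγq ((hdvd0 γ).mpr h)
      have hφβinj : Function.Injective (fun c : ℤ => φ (beta p c)) := by
        intro c c' h
        simp only at h
        have h2 : φ (beta p c - beta p c') = 0 := by
          rw [map_sub, h, sub_self]
        rw [hβdiff, map_mul, map_intCast] at h2
        rcases mul_eq_zero.mp h2 with h3 | h3
        · have h6 : c - c' = 0 := by exact_mod_cast h3
          omega
        · exact absurd h3 hφγ
      have key : ∀ (G : MvPolynomial (Fin (k + 2)) ℚ) (c : ℤ),
          φ (subst p c G) = ((E G).map φ).eval (φ (beta p c)) := by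
        intro G c
        rw [subst, Polynomial.eval_map, Polynomial.eval₂_at_apply]
      by_cases hEA : (E A).map φ = 0
      · by_cases hEB : (E B).map φ = 0
        · exfalso
          have hCA : Polynomial.C q ∣ E A := (Polynomial.C_dvd_iff_dvd_coeff q (E A)).mpr
            (fun n => (hdvd0 _).mpr (by rw [← Polynomial.coeff_map, hEA]; simp))
          have hCB : Polynomial.C q ∣ E B := (Polynomial.C_dvd_iff_dvd_coeff q (E B)).mpr
            (fun n => (hdvd0 _).mpr (by rw [← Polynomial.coeff_map, hEB]; simp))
          exact hqpr.not_unit (Polynomial.isUnit_C.mp (hab hCA hCB))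
        · refine Set.Finite.subset
            ((Polynomial.finite_setOf_isRoot hEB).preimage hφβinj.injOn) ?_
          rintro c ⟨-, h2⟩
          simp only [Set.mem_preimage, Set.mem_setOf_eq, Polynomial.IsRoot]
          rw [← key B c]
          exact (hdvd0 _).mp h2
      · refine Set.Finite.subset
          ((Polynomial.finite_setOf_isRoot hEA).preimage hφβinj.injOn) ?_
        rintro c ⟨h1, -⟩
        simp only [Set.mem_preimage, Set.mem_setOf_eq, Polynomial.IsRoot]
        rw [← key A c]
        exact (hdvd0 _).mp h1
  have hcover : {c : ℤ | ¬ IsRelPrime (subst p c A) (subst p c B)} ⊆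
      ⋃ q ∈ (UniqueFactorizationMonoid.factors m₀).toFinset,
        {c : ℤ | q ∣ subst p c A ∧ q ∣ subst p c B} := by
    intro c hc
    simp only [Set.mem_setOf_eq] at hc
    rw [IsRelPrime] at hc
    push_neg at hc
    obtain ⟨d, hd1, hd2, hdu⟩ := hc
    have hdm : d ∣ m₀ := by
      rw [← hBez c]
      exact dvd_add (Dvd.dvd.mul_left hd1 _) (Dvd.dvd.mul_left hd2 _)
    have hd0 : d ≠ 0 := by
      rintro rfl
      exact hm₀ (zero_dvd_iff.mp hdm)
    obtain ⟨π, hπirr, hπd⟩ := WfDvdMonoid.exists_irreducible_factor hdu hd0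
    obtain ⟨q, hqf, hassoc⟩ :=
      UniqueFactorizationMonoid.exists_mem_factors_of_dvd hm₀ hπirr (hπd.trans hdm)
    refine Set.mem_biUnion (Multiset.mem_toFinset.mpr hqf) ?_
    exact ⟨(hassoc.symm.dvd).trans (hπd.trans hd1), (hassoc.symm.dvd).trans (hπd.trans hd2)⟩
  have hbig : ({c : ℤ | subst p c Q = 0}
      ∪ {c : ℤ | ¬ IsRelPrime (subst p c A) (subst p c B)}).Finite :=
    hfinQ.union (Set.Finite.subset
      (Set.Finite.biUnion (Finset.finite_toSet _) hSfin) hcover)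
  obtain ⟨c, hc⟩ := hbig.infinite_compl.nonempty
  simp only [Set.mem_compl_iff, Set.mem_union, Set.mem_setOf_eq, not_or] at hc
  exact ⟨c, not_not.mp hc.2, hc.1⟩

lemma mainL (k : ℕ) : ∀ (A B Q : MvPolynomial (Fin (k + 1)) ℚ) (p : Fin (k + 1) → ℚ),
    IsRelPrime A B → eval p A ≠ 0 → Q ≠ 0 →
    ∃ c : Fin (k + 1) → ℤ,
      IsCoprime (lineComp p c A) (lineComp p c B) ∧ lineComp p c Q ≠ 0 := by
  induction k with
  | zero =>
    intro A B Q p hAB hA hQ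
    set c : Fin 1 → ℤ := fun _ => 1 with hc
    set ψ : Polynomial ℚ →ₐ[ℚ] MvPolynomial (Fin 1) ℚ :=
      Polynomial.aeval (X 0 - C (p 0)) with hψ
    have hcomp1 : ∀ f : Polynomial ℚ, lineComp p c (ψ f) = f := by
      intro f
      have h : (lineComp p c).comp ψ = AlgHom.id ℚ (Polynomial ℚ) := by
        apply Polynomial.algHom_ext
        simp [hψ, lineComp, hc]
      exact congrArg (fun g => g f) (congrArg DFunLike.coe h)
    have hcomp2 : ∀ F : MvPolynomial (Fin 1) ℚ, ψ (lineComp p c F) = F := by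
      intro F
      have h : ψ.comp (lineComp p c) = AlgHom.id ℚ (MvPolynomial (Fin 1) ℚ) := by
        apply algHom_ext
        intro i
        have hi : i = 0 := Fin.fin_one_eq_zero i
        subst hi
        simp [hψ, lineComp, hc]
      exact congrArg (fun g => g F) (congrArg DFunLike.coe h)
    have hrel : IsRelPrime (lineComp p c A) (lineComp p c B) := by
      intro d hd1 hd2
      have h1 : ψ d ∣ A := by
        have := map_dvd ψ hd1
        rwa [hcomp2 A] at this
      have h2 : ψ d ∣ B := by
        have := map_dvd ψ hd2
        rwa [hcomp2 B] at this
      have := (hAB h1 h2).map (lineComp p c)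
      rwa [hcomp1 d] at this
    refine ⟨c, isCoprime_of_isRelPrime hrel, ?_⟩
    intro h
    apply hQ
    rw [← hcomp2 Q, h, map_zero]
  | succ k ih =>
    intro A B Q p hAB hA hQ
    obtain ⟨c, hrel, hQ'⟩ := exists_good_c p A B Q hAB hA hQ
    obtain ⟨c', hco, hq⟩ := ih (subst p c A) (subst p c B) (subst p c Q) (p ∘ Fin.succ)
      hrel (by rw [eval_subst]; exact hA) hQ'
    refine ⟨Fin.cases (c * c' 0) c', ?_, ?_⟩
    · rw [← lineComp_subst p c c' A, ← lineComp_subst p c c' B]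
      exact hco
    · rw [← lineComp_subst p c c' Q]
      exact hq

lemma eval_map_intCast {r : ℕ} (F : MvPolynomial (Fin r) ℤ) (n : Fin r → ℤ) :
    eval (fun j => ((n j : ℤ) : ℚ)) (F.map (Int.castRingHom ℚ)) = ((eval n F : ℤ) : ℚ) := by
  rw [eval_map]
  have h := eval₂_comp_left (Int.castRingHom ℚ) (RingHom.id ℤ) n F
  simp only [RingHom.comp_id] at h
  have h2 : (⇑(Int.castRingHom ℚ) ∘ n) = fun j => ((n j : ℤ) : ℚ) := rfl
  rw [h2] at h
  rw [← h]
  rfl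

lemma dvd_eval_sub_eval {r : ℕ} (M : ℤ) (F : MvPolynomial (Fin r) ℤ) (x y : Fin r → ℤ)
    (h : ∀ j, M ∣ x j - y j) : M ∣ eval x F - eval y F := by
  induction F using MvPolynomial.induction_on with
  | C a => simp
  | add f g hf hg =>
    have hh := dvd_add hf hg
    simp only [map_add]
    rw [show eval x f + eval x g - (eval y f + eval y g)
      = eval x f - eval y f + (eval x g - eval y g) by ring]
    exact hh
  | mul_X f j hf =>
    simp only [map_mul, eval_X]
    have h1 : eval x f * x j - eval y f * y j
        = eval x f * (x j - y j) + (eval x f - eval y f) * y j := by ring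
    rw [h1]
    exact dvd_add (Dvd.dvd.mul_left (h j) _) (Dvd.dvd.mul_right hf _)

lemma exists_combination {s r : ℕ} (P : Fin s → MvPolynomial (Fin r) ℤ)
    (hcop : ∀ Dp : MvPolynomial (Fin r) ℚ,
      (∀ i, Dp ∣ (P i).map (Int.castRingHom ℚ)) → Dp.totalDegree = 0)
    (k₀ : Fin s) (hk₀ : (P k₀).map (Int.castRingHom ℚ) ≠ 0) :
    ∃ u : ℤ, IsRelPrime ((P k₀).map (Int.castRingHom ℚ))
      ((∑ i : Fin s, C (u ^ (i : ℕ)) * P i).map (Int.castRingHom ℚ)) := by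
  classical
  set Pq : Fin s → MvPolynomial (Fin r) ℚ := fun i => (P i).map (Int.castRingHom ℚ) with hPq
  have hmap : ∀ u : ℤ, (∑ i : Fin s, C (u ^ (i : ℕ)) * P i).map (Int.castRingHom ℚ)
      = ∑ i : Fin s, C (((u : ℚ)) ^ (i : ℕ)) * Pq i := by
    intro u
    rw [map_sum (MvPolynomial.map (Int.castRingHom ℚ))]
    refine Finset.sum_congr rfl fun i _ => ?_
    rw [map_mul (MvPolynomial.map (Int.castRingHom ℚ)), MvPolynomial.map_C]
    rw [hPq]
    simp
  have hfin : ∀ q ∈ (UniqueFactorizationMonoid.factors (Pq k₀)).toFinset,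
      {u : ℤ | q ∣ ∑ i : Fin s, C (((u : ℚ)) ^ (i : ℕ)) * Pq i}.Finite := by
    intro q hqf
    have hqirr : Irreducible q :=
      UniqueFactorizationMonoid.irreducible_of_factor q (Multiset.mem_toFinset.mp hqf)
    have hqpr : Prime q := UniqueFactorizationMonoid.irreducible_iff_prime.mp hqirr
    obtain ⟨i₀, hi₀⟩ : ∃ i, ¬ q ∣ Pq i := by
      by_contra hall
      push_neg at hall
      exact not_prime_of_totalDegree_eq_zero hqpr (hcop q hall)
    set I := Ideal.span {q} with hI
    haveI hIp : I.IsPrime := (Ideal.span_singleton_prime hqpr.ne_zero).mpr hqpr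
    haveI : Nontrivial (MvPolynomial (Fin r) ℚ ⧸ I) := Ideal.Quotient.nontrivial_iff.mpr hIp.ne_top
    haveI : CharZero (MvPolynomial (Fin r) ℚ ⧸ I) :=
      charZero_of_injective_algebraMap
        ((algebraMap ℚ (MvPolynomial (Fin r) ℚ ⧸ I)).injective)
    set φ : MvPolynomial (Fin r) ℚ →+* MvPolynomial (Fin r) ℚ ⧸ I :=
      Ideal.Quotient.mk I with hφ
    have hdvd0 : ∀ x, q ∣ x ↔ φ x = 0 := fun x => by
      rw [hφ, Ideal.Quotient.eq_zero_iff_mem, hI, Ideal.mem_span_singleton]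
    set W : Polynomial (MvPolynomial (Fin r) ℚ ⧸ I) :=
      ∑ i : Fin s, Polynomial.monomial (i : ℕ) (φ (Pq i)) with hW
    have hWcoeff : W.coeff (i₀ : ℕ) = φ (Pq i₀) := by
      rw [hW, Polynomial.finset_sum_coeff]
      rw [Finset.sum_eq_single i₀]
      · simp [Polynomial.coeff_monomial]
      · intro b _ hb
        rw [Polynomial.coeff_monomial, if_neg (fun hcon => hb (Fin.val_injective hcon))]
      · intro hcon
        exact absurd (Finset.mem_univ i₀) hcon
    have hW0 : W ≠ 0 := by
      intro h
      apply hi₀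
      rw [hdvd0]
      rw [← hWcoeff, h, Polynomial.coeff_zero]
    have heval : ∀ u : ℤ, φ (∑ i : Fin s, C (((u : ℚ)) ^ (i : ℕ)) * Pq i)
        = W.eval ((u : MvPolynomial (Fin r) ℚ ⧸ I)) := by
      intro u
      rw [map_sum φ, hW, Polynomial.eval_finset_sum]
      refine Finset.sum_congr rfl fun i _ => ?_
      rw [map_mul, Polynomial.eval_monomial]
      have h1 : (C (((u : ℚ)) ^ (i : ℕ)) : MvPolynomial (Fin r) ℚ)
          = ((u ^ (i : ℕ) : ℤ) : MvPolynomial (Fin r) ℚ) := by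
        rw [← map_intCast (C : ℚ →+* MvPolynomial (Fin r) ℚ) (u ^ (i : ℕ))]
        push_cast
        rfl
      rw [h1, map_intCast]
      push_cast
      ring
    have hinj : Function.Injective (fun u : ℤ => ((u : MvPolynomial (Fin r) ℚ ⧸ I))) :=
      fun u u' h => Int.cast_injective h
    refine Set.Finite.subset ((Polynomial.finite_setOf_isRoot hW0).preimage hinj.injOn) ?_
    intro u hu
    simp only [Set.mem_setOf_eq] at hu
    simp only [Set.mem_preimage, Set.mem_setOf_eq, Polynomial.IsRoot]
    rw [← heval u]
    exact (hdvd0 _).mp hu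
  obtain ⟨u, hu⟩ :=
    ((Set.Finite.biUnion (Finset.finite_toSet _) hfin).infinite_compl).nonempty
  refine ⟨u, ?_⟩
  rw [hmap]
  intro d hd1 hd2
  by_contra hdu
  have hd0 : d ≠ 0 := by
    rintro rfl
    exact hk₀ (zero_dvd_iff.mp hd1)
  obtain ⟨π, hπirr, hπd⟩ := WfDvdMonoid.exists_irreducible_factor hdu hd0
  obtain ⟨q, hqf, hassoc⟩ :=
    UniqueFactorizationMonoid.exists_mem_factors_of_dvd hk₀ hπirr (hπd.trans hd1)
  apply hu
  exact Set.mem_biUnion (Multiset.mem_toFinset.mpr hqf)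
    ((hassoc.symm.dvd).trans (hπd.trans hd2))

end
end Stmt16Aux

open Stmt16Aux

/-- If nonzero coprime polynomials take coprime values at one point, they do so
on a Zariski-dense set of integer points. -/
theorem stmt16 (s r : ℕ) (hs : 2 ≤ s) (hr : 1 ≤ r)
    (P : Fin s → MvPolynomial (Fin r) ℤ)
    (hP : ∀ i, P i ≠ 0)
    (hcop : ∀ D : MvPolynomial (Fin r) ℚ,
      (∀ i, D ∣ (P i).map (Int.castRingHom ℚ)) → D.totalDegree = 0)
    (n₀ : Fin r → ℤ) (h₁ : (Finset.univ.gcd fun i => eval n₀ (P i)) = 1) :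
    ∀ Q : MvPolynomial (Fin r) ℚ, Q ≠ 0 →
      ∃ n : Fin r → ℤ, (Finset.univ.gcd fun i => eval n (P i)) = 1 ∧
        eval (fun j => (n j : ℚ)) Q ≠ 0 := by
  intro Q hQ
  classical
  obtain ⟨k, rfl⟩ : ∃ k, r = k + 1 := ⟨r - 1, by omega⟩
  -- a point value that is nonzero
  obtain ⟨k₀, hk₀⟩ : ∃ k₀ : Fin s, eval n₀ (P k₀) ≠ 0 := by
    by_contra hall
    push_neg at hall
    rw [Finset.gcd_eq_zero_iff.mpr (fun i _ => hall i)] at h₁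
    exact absurd h₁ (by norm_num)
  have hk₀q : (P k₀).map (Int.castRingHom ℚ) ≠ 0 := by
    intro h
    exact hP k₀ (MvPolynomial.map_injective _ Int.cast_injective (by rw [h, map_zero]))
  obtain ⟨u, hrel⟩ := exists_combination P hcop k₀ hk₀q
  set A := P k₀ with hA
  set Bz : MvPolynomial (Fin (k + 1)) ℤ := ∑ i : Fin s, C (u ^ (i : ℕ)) * P i with hBz
  set pq : Fin (k + 1) → ℚ := fun j => ((n₀ j : ℤ) : ℚ) with hpq
  have hevalA : eval pq (A.map (Int.castRingHom ℚ)) = ((eval n₀ A : ℤ) : ℚ) :=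
    eval_map_intCast A n₀
  obtain ⟨c, hco, hq⟩ := mainL k (A.map (Int.castRingHom ℚ)) (Bz.map (Int.castRingHom ℚ))
    Q pq hrel (by rw [hevalA]; exact_mod_cast hk₀) hQ
  obtain ⟨Uq, Vq, hUVq⟩ := hco
  obtain ⟨s₁, hs₁⟩ := IsLocalization.integerNormalization_map_to_map (nonZeroDivisors ℤ) Uq
  obtain ⟨s₂, hs₂⟩ := IsLocalization.integerNormalization_map_to_map (nonZeroDivisors ℤ) Vq
  rw [algebraMap_int_eq] at hs₁ hs₂
  set U₀ := IsLocalization.integerNormalization (nonZeroDivisors ℤ) Uq with hU₀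
  set V₀ := IsLocalization.integerNormalization (nonZeroDivisors ℤ) Vq with hV₀
  set N : ℤ := (s₁ : ℤ) * (s₂ : ℤ) with hN
  have hN0 : N ≠ 0 :=
    mul_ne_zero (nonZeroDivisors.coe_ne_zero s₁) (nonZeroDivisors.coe_ne_zero s₂)
  -- evaluation along the line
  have hft : ∀ (t : ℤ) (F : MvPolynomial (Fin (k + 1)) ℤ),
      Polynomial.eval ((t : ℚ)) (lineComp pq c (F.map (Int.castRingHom ℚ)))
        = ((eval (fun j => n₀ j + t * c j) F : ℤ) : ℚ) := by
    intro t F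
    rw [eval_lineComp]
    have h2 : (fun j => pq j + (t : ℚ) * ((c j : ℤ) : ℚ))
        = fun j => (((n₀ j + t * c j : ℤ)) : ℚ) := by
      funext j
      rw [hpq]
      push_cast
      ring
    rw [h2]
    exact eval_map_intCast F _
  -- integer Bezout identity along the line
  have hbez : ∀ t : ℤ,
      ((s₂ : ℤ) * U₀.eval t) * eval (fun j => n₀ j + t * c j) A
        + ((s₁ : ℤ) * V₀.eval t) * eval (fun j => n₀ j + t * c j) Bz = N := by
    intro t
    have hq1 := congrArg (Polynomial.eval ((t : ℚ))) hUVq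
    simp only [Polynomial.eval_add, Polynomial.eval_mul, Polynomial.eval_one] at hq1
    apply Int.cast_injective (α := ℚ)
    push_cast
    rw [← hft t A, ← hft t Bz]
    have eU : ((U₀.eval t : ℤ) : ℚ) = ((s₁ : ℤ) : ℚ) * Uq.eval ((t : ℚ)) := by
      have h3 : ((U₀.map (Int.castRingHom ℚ)).eval ((t : ℤ) : ℚ))
          = ((U₀.eval t : ℤ) : ℚ) := by
        simpa using Polynomial.eval_intCast_map (Int.castRingHom ℚ) U₀ t
      rw [hs₁] at h3
      rw [← h3]
      rw [zsmul_eq_mul, Polynomial.eval_mul, Polynomial.eval_intCast]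
    have eV : ((V₀.eval t : ℤ) : ℚ) = ((s₂ : ℤ) : ℚ) * Vq.eval ((t : ℚ)) := by
      have h3 : ((V₀.map (Int.castRingHom ℚ)).eval ((t : ℤ) : ℚ))
          = ((V₀.eval t : ℤ) : ℚ) := by
        simpa using Polynomial.eval_intCast_map (Int.castRingHom ℚ) V₀ t
      rw [hs₂] at h3
      rw [← h3]
      rw [zsmul_eq_mul, Polynomial.eval_mul, Polynomial.eval_intCast]
    rw [eU, eV]
    have hNQ : ((N : ℤ) : ℚ) = ((s₁ : ℤ) : ℚ) * ((s₂ : ℤ) : ℚ) := by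
      rw [hN]; push_cast; ring
    rw [hNQ]
    linear_combination (((s₁ : ℤ) : ℚ) * ((s₂ : ℤ) : ℚ)) * hq1
  -- choose a good multiple of N
  have hfinroot : {x : ℚ | (lineComp pq c Q).IsRoot x}.Finite :=
    Polynomial.finite_setOf_isRoot hq
  have hinj : Function.Injective (fun j : ℤ => ((N * j : ℤ) : ℚ)) := by
    intro j j' h
    simp only at h
    have h2 : N * j = N * j' := Int.cast_injective h
    exact mul_left_cancel₀ hN0 h2
  obtain ⟨j, hj⟩ := ((hfinroot.preimage hinj.injOn).infinite_compl).nonempty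
  set t : ℤ := N * j with ht
  set n : Fin (k + 1) → ℤ := fun i => n₀ i + t * c i with hn
  refine ⟨n, ?_, ?_⟩
  · -- the gcd is 1
    have hαβ := hbez t
    set d := Finset.univ.gcd (fun i => eval n (P i)) with hd
    have hdA : d ∣ eval n A := Finset.gcd_dvd (Finset.mem_univ k₀)
    have hdB : d ∣ eval n Bz := by
      rw [hBz, map_sum (eval n)]
      refine Finset.dvd_sum fun i _ => ?_
      rw [map_mul (eval n)]
      exact Dvd.dvd.mul_left (Finset.gcd_dvd (Finset.mem_univ i)) _
    have hdN : d ∣ N := by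
      rw [← hαβ]
      exact dvd_add (hdA.mul_left _) (hdB.mul_left _)
    have hcong : ∀ F : MvPolynomial (Fin (k + 1)) ℤ, N ∣ eval n F - eval n₀ F := by
      intro F
      refine dvd_eval_sub_eval N F n n₀ (fun i2 => ⟨j * c i2, ?_⟩)
      rw [hn]
      simp only
      rw [ht]
      ring
    have hnorm : normalize d = d := Finset.normalize_gcd
    rcases eq_or_ne d.natAbs 1 with hna | hna
    · have : d = 1 ∨ d = -1 := by omega
      rcases this with h | h
      · exact h
      · exfalso
        have habs := Int.abs_eq_normalize d
        rw [hnorm, h] at habs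
        norm_num at habs
    · exfalso
      obtain ⟨pp, hpp, hpd⟩ := Int.exists_prime_and_dvd hna
      have hppN : pp ∣ N := hpd.trans hdN
      have hppval : ∀ i, pp ∣ eval n₀ (P i) := by
        intro i
        have h1 : pp ∣ eval n (P i) := hpd.trans (Finset.gcd_dvd (Finset.mem_univ i))
        have h2 : pp ∣ eval n (P i) - eval n₀ (P i) := hppN.trans (hcong (P i))
        have h3 := dvd_sub h1 h2
        simpa using h3
      have hone : pp ∣ (1 : ℤ) := h₁ ▸ Finset.dvd_gcd (fun i _ => hppval i)
      exact hpp.not_unit (isUnit_of_dvd_one hone)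
  · -- Q does not vanish
    have hval : eval (fun i2 => ((n i2 : ℤ) : ℚ)) Q = (lineComp pq c Q).eval ((t : ℚ)) := by
      have h2 : (fun j => pq j + (t : ℚ) * ((c j : ℤ) : ℚ))
          = fun i2 => ((n i2 : ℤ) : ℚ) := by
        funext i2
        rw [hn, hpq]
        simp only
        push_cast
        ring
      rw [eval_lineComp, h2]
    rw [hval]
    intro h
    apply hj
    simp only [Set.mem_preimage, Set.mem_setOf_eq, Polynomial.IsRoot]
    rw [← ht]
    exact h
end

section
/- Let P_1,…,P_s ∈ ℤ[x_1,…,x_r] (s ≥ 2, r ≥ 2) be nonzero coprime polynomials, and let n ∈ ℤ^r be such that P_i(n) ≠ 0 for at least one i ∈ {1,…,s}. Then the polynomials P_1(u·n + t·a),…,P_s(u·n + t·a), obtained by substituting x_j := u·n_j + t·a_j, are coprime in ℚ[a_1,…,a_r, u, t]. Consequently there is a nonzero polynomial G ∈ ℚ[a_1,…,a_r] such that for every a* ∈ ℤ^r with G(a*) ≠ 0, the polynomials P_1(u·n + t·a*),…,P_s(u·n + t·a*) are coprime in ℚ[u,t]. -/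
open MvPolynomial

/-- Substitution `x_j ↦ u·n_j + t·a_j`, from `ℤ[x_1,…,x_r]` to
`ℚ[a_1,…,a_r,u,t]` (the variable `Sum.inl j` is `a_j`, `Sum.inr 0` is `u`
and `Sum.inr 1` is `t`). -/
noncomputable def subLine (r : ℕ) (n : Fin r → ℤ) :
    MvPolynomial (Fin r) ℤ →+* MvPolynomial (Fin r ⊕ Fin 2) ℚ :=
  eval₂Hom (Int.castRingHom (MvPolynomial (Fin r ⊕ Fin 2) ℚ))
    fun j => C ((n j : ℚ)) * X (Sum.inr 0) + X (Sum.inl j) * X (Sum.inr 1)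

/-- Substitution `x_j ↦ u·n_j + t·a*_j` for fixed `n, a* ∈ ℤ^r`, from
`ℤ[x_1,…,x_r]` to `ℚ[u,t]` (the variable `0` is `u` and `1` is `t`). -/
noncomputable def subLineAt (r : ℕ) (n a : Fin r → ℤ) :
    MvPolynomial (Fin r) ℤ →+* MvPolynomial (Fin 2) ℚ :=
  eval₂Hom (Int.castRingHom (MvPolynomial (Fin 2) ℚ))
    fun j => C ((n j : ℚ)) * X 0 + C ((a j : ℚ)) * X 1

namespace Stmt17Aux

noncomputable section

variable (r : ℕ)

/-- `ℚ[a,u,t]`. -/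
abbrev Rr := MvPolynomial (Fin r ⊕ Fin 2) ℚ
/-- `ℚ[a,v]` (one extra variable). -/
abbrev Sr := MvPolynomial (Fin r ⊕ Fin 1) ℚ

/-- Split off the variable `t = inr 1`. -/
def psiT : Rr r →+* Polynomial (Sr r) :=
  eval₂Hom ((Polynomial.C).comp MvPolynomial.C)
    (Sum.elim (fun j => Polynomial.C (X (Sum.inl j)))
      (fun k => if k = 0 then Polynomial.C (X (Sum.inr 0)) else Polynomial.X))

/-- Inclusion `ℚ[a,v] → ℚ[a,u,t]`, `v ↦ u`. -/
def toRT : Sr r →+* Rr r :=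
  eval₂Hom MvPolynomial.C (Sum.elim (fun j => X (Sum.inl j)) (fun _ => X (Sum.inr 0)))

def psiTinv : Polynomial (Sr r) →+* Rr r :=
  Polynomial.eval₂RingHom (toRT r) (X (Sum.inr 1))

lemma psiTinv_psiT (x : Rr r) : psiTinv r (psiT r x) = x := by
  have : (psiTinv r).comp (psiT r) = RingHom.id _ := by
    apply MvPolynomial.ringHom_ext
    · intro a; simp [psiT, psiTinv, toRT]
    · rintro (j | k)
      · simp [psiT, psiTinv, toRT]
      · fin_cases k <;> simp [psiT, psiTinv, toRT]
  exact RingHom.congr_fun this x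

lemma psiT_psiTinv (x : Polynomial (Sr r)) : psiT r (psiTinv r x) = x := by
  have : (psiT r).comp (psiTinv r) = RingHom.id _ := by
    apply Polynomial.ringHom_ext
    · intro a
      have h : ((psiT r).comp (psiTinv r)).comp (Polynomial.C : Sr r →+* Polynomial (Sr r))
          = (Polynomial.C : Sr r →+* Polynomial (Sr r)) := by
        apply MvPolynomial.ringHom_ext
        · intro b; simp [psiT, psiTinv, toRT]
        · rintro (j | k)
          · simp [psiT, psiTinv, toRT]
          · fin_cases k <;> simp [psiT, psiTinv, toRT]
      exact RingHom.congr_fun h a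
    · simp [psiT, psiTinv, toRT]
  exact RingHom.congr_fun this x

/-- Split off the variable `u = inr 0`. -/
def psiU : Rr r →+* Polynomial (Sr r) :=
  eval₂Hom ((Polynomial.C).comp MvPolynomial.C)
    (Sum.elim (fun j => Polynomial.C (X (Sum.inl j)))
      (fun k => if k = 0 then Polynomial.X else Polynomial.C (X (Sum.inr 0))))

/-- Inclusion `ℚ[a,v] → ℚ[a,u,t]`, `v ↦ t`. -/
def toRU : Sr r →+* Rr r :=
  eval₂Hom MvPolynomial.C (Sum.elim (fun j => X (Sum.inl j)) (fun _ => X (Sum.inr 1)))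

def psiUinv : Polynomial (Sr r) →+* Rr r :=
  Polynomial.eval₂RingHom (toRU r) (X (Sum.inr 0))

lemma psiUinv_psiU (x : Rr r) : psiUinv r (psiU r x) = x := by
  have : (psiUinv r).comp (psiU r) = RingHom.id _ := by
    apply MvPolynomial.ringHom_ext
    · intro a; simp [psiU, psiUinv, toRU]
    · rintro (j | k)
      · simp [psiU, psiUinv, toRU]
      · fin_cases k <;> simp [psiU, psiUinv, toRU]
  exact RingHom.congr_fun this x

lemma psiU_psiUinv (x : Polynomial (Sr r)) : psiU r (psiUinv r x) = x := by
  have : (psiU r).comp (psiUinv r) = RingHom.id _ := by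
    apply Polynomial.ringHom_ext
    · intro a
      have h : ((psiU r).comp (psiUinv r)).comp (Polynomial.C : Sr r →+* Polynomial (Sr r))
          = (Polynomial.C : Sr r →+* Polynomial (Sr r)) := by
        apply MvPolynomial.ringHom_ext
        · intro b; simp [psiU, psiUinv, toRU]
        · rintro (j | k)
          · simp [psiU, psiUinv, toRU]
          · fin_cases k <;> simp [psiU, psiUinv, toRU]
      exact RingHom.congr_fun h a
    · simp [psiU, psiUinv, toRU]
  exact RingHom.congr_fun this x

/-- Split off the variable `inr 0` from `ℚ[a,v]`. -/
def psiS : Sr r →+* Polynomial (MvPolynomial (Fin r) ℚ) :=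
  eval₂Hom ((Polynomial.C).comp MvPolynomial.C)
    (Sum.elim (fun j => Polynomial.C (X j)) (fun _ => Polynomial.X))

def toSS : MvPolynomial (Fin r) ℚ →+* Sr r :=
  eval₂Hom MvPolynomial.C (fun j => X (Sum.inl j))

def psiSinv : Polynomial (MvPolynomial (Fin r) ℚ) →+* Sr r :=
  Polynomial.eval₂RingHom (toSS r) (X (Sum.inr 0))

lemma psiSinv_psiS (x : Sr r) : psiSinv r (psiS r x) = x := by
  have : (psiSinv r).comp (psiS r) = RingHom.id _ := by
    apply MvPolynomial.ringHom_ext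
    · intro a; simp [psiS, psiSinv, toSS]
    · rintro (j | k)
      · simp [psiS, psiSinv, toSS]
      · fin_cases k <;> simp [psiS, psiSinv, toSS]
  exact RingHom.congr_fun this x

lemma psiS_psiSinv (x : Polynomial (MvPolynomial (Fin r) ℚ)) : psiS r (psiSinv r x) = x := by
  have : (psiS r).comp (psiSinv r) = RingHom.id _ := by
    apply Polynomial.ringHom_ext
    · intro a
      have h : ((psiS r).comp (psiSinv r)).comp
            (Polynomial.C : MvPolynomial (Fin r) ℚ →+* Polynomial (MvPolynomial (Fin r) ℚ))
          = Polynomial.C := by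
        apply MvPolynomial.ringHom_ext
        · intro b; simp [psiS, psiSinv, toSS]
        · intro j; simp [psiS, psiSinv, toSS]
      exact RingHom.congr_fun h a
    · simp [psiS, psiSinv, toSS]
  exact RingHom.congr_fun this x

/-- `ℚ[u,t] → (ℚ[Y])[Z]`, `u ↦ C Y`, `t ↦ Z`. -/
def psi2 : MvPolynomial (Fin 2) ℚ →+* Polynomial (Polynomial ℚ) :=
  eval₂Hom ((Polynomial.C).comp Polynomial.C)
    (fun k => if k = 0 then Polynomial.C Polynomial.X else Polynomial.X)

def psi2inv : Polynomial (Polynomial ℚ) →+* MvPolynomial (Fin 2) ℚ :=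
  Polynomial.eval₂RingHom (Polynomial.eval₂RingHom MvPolynomial.C (X 0)) (X 1)

lemma psi2inv_psi2 (x : MvPolynomial (Fin 2) ℚ) : psi2inv (psi2 x) = x := by
  have : psi2inv.comp psi2 = RingHom.id _ := by
    apply MvPolynomial.ringHom_ext
    · intro a; simp [psi2, psi2inv]
    · intro k; fin_cases k <;> simp [psi2, psi2inv]
  exact RingHom.congr_fun this x

lemma psi2_psi2inv (x : Polynomial (Polynomial ℚ)) : psi2 (psi2inv x) = x := by
  have : psi2.comp psi2inv = RingHom.id _ := by
    apply Polynomial.ringHom_ext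
    · intro a
      have h : (psi2.comp psi2inv).comp (Polynomial.C : Polynomial ℚ →+* _)
          = Polynomial.C := by
        apply Polynomial.ringHom_ext
        · intro b; simp [psi2, psi2inv]
        · simp [psi2, psi2inv]
      exact RingHom.congr_fun h a
    · simp [psi2, psi2inv]
  exact RingHom.congr_fun this x

/-- A divisor of a nonzero constant in `B[X]` is a constant dividing it. -/
lemma dvd_C_cases {B : Type*} [CommRing B] [IsDomain B] {x : Polynomial B} {b : B}
    (hb : b ≠ 0) (h : x ∣ Polynomial.C b) :
    ∃ y : B, y ∣ b ∧ y ≠ 0 ∧ x = Polynomial.C y := by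
  obtain ⟨z, hz⟩ := h
  have hCb : (Polynomial.C b : Polynomial B) ≠ 0 := by
    simpa using hb
  have hx : x ≠ 0 := by rintro rfl; simp at hz; exact hCb (by simp [hz])
  have hzz : z ≠ 0 := by rintro rfl; simp at hz; exact hCb (by simp [hz])
  have hdeg : x.natDegree + z.natDegree = 0 := by
    rw [← Polynomial.natDegree_mul hx hzz, ← hz]; simp
  have hx0 : x = Polynomial.C (x.coeff 0) :=
    Polynomial.eq_C_of_natDegree_eq_zero (Nat.eq_zero_of_add_eq_zero_right hdeg)
  have hz0 : z = Polynomial.C (z.coeff 0) :=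
    Polynomial.eq_C_of_natDegree_eq_zero (Nat.eq_zero_of_add_eq_zero_left hdeg)
  refine ⟨x.coeff 0, ⟨z.coeff 0, ?_⟩, ?_, hx0⟩
  · have := hz
    rw [hx0, hz0, ← Polynomial.C_mul] at this
    exact Polynomial.C_injective this
  · rintro h0; rw [h0] at hx0; simp at hx0; exact hx hx0

lemma eq_C_of_totalDegree_eq_zero' {σ : Type*} {p : MvPolynomial σ ℚ}
    (h : p.totalDegree = 0) : p = MvPolynomial.C (MvPolynomial.coeff 0 p) := by
  classical
  ext m
  rw [MvPolynomial.coeff_C]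
  split_ifs with hm
  · subst hm; rfl
  · by_contra hc
    have hmem : m ∈ p.support := MvPolynomial.mem_support_iff.mpr hc
    have := ((MvPolynomial.totalDegree_eq_zero_iff σ p).mp h) m hmem
    exact hm (Finsupp.ext fun x => (this x)).symm

lemma psiT_renameC (q : MvPolynomial (Fin r) ℚ) :
    psiT r (rename Sum.inl q) = Polynomial.C (rename Sum.inl q : Sr r) := by
  have h : (psiT r).comp ((rename (Sum.inl : Fin r → Fin r ⊕ Fin 2)).toRingHom)
      = (Polynomial.C : Sr r →+* _).comp
          ((rename (Sum.inl : Fin r → Fin r ⊕ Fin 1)).toRingHom) := by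
    apply MvPolynomial.ringHom_ext
    · intro a; simp [psiT]
    · intro j; simp [psiT]
  exact RingHom.congr_fun h q

lemma psiU_renameC (q : MvPolynomial (Fin r) ℚ) :
    psiU r (rename Sum.inl q) = Polynomial.C (rename Sum.inl q : Sr r) := by
  have h : (psiU r).comp ((rename (Sum.inl : Fin r → Fin r ⊕ Fin 2)).toRingHom)
      = (Polynomial.C : Sr r →+* _).comp
          ((rename (Sum.inl : Fin r → Fin r ⊕ Fin 1)).toRingHom) := by
    apply MvPolynomial.ringHom_ext
    · intro a; simp [psiU]
    · intro j; simp [psiU]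
  exact RingHom.congr_fun h q

lemma psiS_renameC (q : MvPolynomial (Fin r) ℚ) :
    psiS r (rename Sum.inl q) = Polynomial.C q := by
  have h : (psiS r).comp ((rename (Sum.inl : Fin r → Fin r ⊕ Fin 1)).toRingHom)
      = (Polynomial.C : MvPolynomial (Fin r) ℚ →+* _) := by
    apply MvPolynomial.ringHom_ext
    · intro a; simp [psiS]
    · intro j; simp [psiS]
  exact RingHom.congr_fun h q

/-- Common divisors (in `ℚ[a,u,t]`) of the polynomials `q i` viewed via
`rename Sum.inl` are nonzero constants, provided the `q i` are coprime. -/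
lemma lemB {s : ℕ} {q : Fin s → MvPolynomial (Fin r) ℚ} (i₀ : Fin s) (hq0 : q i₀ ≠ 0)
    (hcop : ∀ D : MvPolynomial (Fin r) ℚ, (∀ i, D ∣ q i) → D.totalDegree = 0)
    {E : Rr r} (hE : ∀ i, E ∣ (rename Sum.inl (q i) : Rr r)) :
    ∃ c : ℚ, c ≠ 0 ∧ E = MvPolynomial.C c := by
  have h1 : ∀ i, psiT r E ∣ Polynomial.C (rename Sum.inl (q i) : Sr r) := fun i => by
    rw [← psiT_renameC]; exact map_dvd _ (hE i)
  have hne : (rename Sum.inl (q i₀) : Sr r) ≠ 0 := fun h =>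
    hq0 (rename_injective _ Sum.inl_injective (by simpa using h))
  obtain ⟨E1, _, hE1ne, hEC⟩ := dvd_C_cases hne (h1 i₀)
  have hdvd1 : ∀ i, E1 ∣ (rename Sum.inl (q i) : Sr r) := fun i => by
    have := h1 i
    rw [hEC] at this
    simpa using (Polynomial.C_dvd_iff_dvd_coeff _ _).mp this 0
  have h2 : ∀ i, psiS r E1 ∣ Polynomial.C (q i) := fun i => by
    rw [← psiS_renameC]; exact map_dvd _ (hdvd1 i)
  obtain ⟨E2, _, hE2ne, hE1C⟩ := dvd_C_cases hq0 (h2 i₀)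
  have hdvd2 : ∀ i, E2 ∣ q i := fun i => by
    have := h2 i
    rw [hE1C] at this
    simpa using (Polynomial.C_dvd_iff_dvd_coeff _ _).mp this 0
  have hdeg := hcop E2 hdvd2
  have hE2C := eq_C_of_totalDegree_eq_zero' hdeg
  set c := MvPolynomial.coeff 0 E2 with hc
  have hcne : c ≠ 0 := fun h => hE2ne (by rw [hE2C, h, map_zero])
  refine ⟨c, hcne, ?_⟩
  have hE1 : E1 = MvPolynomial.C c := by
    have := psiSinv_psiS r E1
    rw [hE1C, hE2C] at this
    rw [← this]
    simp [psiSinv, toSS]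
  have := psiTinv_psiT r E
  rw [hEC, hE1] at this
  rw [← this]
  simp [psiTinv, toRT]

lemma intC_helper {A : Type*} [CommSemiring A] (f g : MvPolynomial (Fin r) ℤ →+* A) (a : ℤ) :
    f (MvPolynomial.C a) = g (MvPolynomial.C a) :=
  RingHom.congr_fun
    (Subsingleton.elim (f.comp (MvPolynomial.C : ℤ →+* MvPolynomial (Fin r) ℤ))
      (g.comp (MvPolynomial.C : ℤ →+* MvPolynomial (Fin r) ℤ))) a

/-- `a_j ↦ (a_j - n_j u)/λ`, `u ↦ u`, `t ↦ λ`. -/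
def thetaL (n : Fin r → ℤ) (l : ℚ) : Rr r →+* Rr r :=
  eval₂Hom MvPolynomial.C
    (Sum.elim (fun j => (X (Sum.inl j) - C ((n j : ℚ)) * X (Sum.inr 0)) * C l⁻¹)
      (fun k => if k = 0 then X (Sum.inr 0) else C l))

/-- `t ↦ λ`, other variables fixed. -/
def phiL (l : ℚ) : Rr r →+* Rr r :=
  eval₂Hom MvPolynomial.C
    (Sum.elim (fun j => X (Sum.inl j)) (fun k => if k = 0 then X (Sum.inr 0) else C l))

/-- `a_j ↦ λ a_j + n_j u`, inverse of the `a`-part of `thetaL`. -/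
def betaLinv (n : Fin r → ℤ) (l : ℚ) : Rr r →+* Rr r :=
  eval₂Hom MvPolynomial.C
    (Sum.elim (fun j => X (Sum.inl j) * C l + C ((n j : ℚ)) * X (Sum.inr 0))
      (fun k => X (Sum.inr k)))

lemma thetaL_subLine (n : Fin r → ℤ) {l : ℚ} (hl : l ≠ 0) (p : MvPolynomial (Fin r) ℤ) :
    thetaL r n l (subLine r n p)
      = (rename Sum.inl ((p).map (Int.castRingHom ℚ)) : Rr r) := by
  have h : (thetaL r n l).comp (subLine r n)
      = ((rename (Sum.inl : Fin r → Fin r ⊕ Fin 2)).toRingHom).comp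
          (MvPolynomial.map (Int.castRingHom ℚ)) := by
    apply MvPolynomial.ringHom_ext
    · exact intC_helper r _ _
    · intro j
      simp [subLine, thetaL]
      rw [mul_assoc, ← MvPolynomial.C_mul, inv_mul_cancel₀ hl, MvPolynomial.C_1, mul_one]
      ring
  exact RingHom.congr_fun h p

lemma betaLinv_thetaL (n : Fin r → ℤ) {l : ℚ} (hl : l ≠ 0) :
    (betaLinv r n l).comp (thetaL r n l) = phiL r l := by
  apply MvPolynomial.ringHom_ext
  · intro a; simp [betaLinv, thetaL, phiL]
  · rintro (j | k)
    · simp [betaLinv, thetaL, phiL]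
      rw [mul_assoc, ← MvPolynomial.C_mul, mul_inv_cancel₀ hl, MvPolynomial.C_1, mul_one]
    · fin_cases k <;> simp [betaLinv, thetaL, phiL]

lemma phiL_eval (l : ℚ) :
    (toRT r).comp ((Polynomial.evalRingHom (MvPolynomial.C l)).comp (psiT r)) = phiL r l := by
  apply MvPolynomial.ringHom_ext
  · intro a; simp [toRT, psiT, phiL]
  · rintro (j | k)
    · simp [toRT, psiT, phiL]
    · fin_cases k <;> simp [toRT, psiT, phiL]

lemma psiT_toRT : (psiT r).comp (toRT r) = (Polynomial.C : Sr r →+* Polynomial (Sr r)) := by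
  apply MvPolynomial.ringHom_ext
  · intro a; simp [toRT, psiT]
  · rintro (j | k)
    · simp [toRT, psiT]
    · fin_cases k <;> simp [toRT, psiT]

lemma toRT_injective : Function.Injective (toRT r) := by
  intro x y h
  have hx := RingHom.congr_fun (psiT_toRT r) x
  have hy := RingHom.congr_fun (psiT_toRT r) y
  simp only [RingHom.comp_apply] at hx hy
  apply Polynomial.C_injective
  rw [← hx, ← hy, h]

/-- Evaluation `a ↦ 0, u ↦ 1, t ↦ X`. -/
def ev1 : Rr r →+* Polynomial ℚ :=
  eval₂Hom Polynomial.C (Sum.elim (fun _ => 0) (fun k => if k = 0 then 1 else Polynomial.X))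

lemma ev1_subLine (n : Fin r → ℤ) (p : MvPolynomial (Fin r) ℤ) :
    ev1 r (subLine r n p) = Polynomial.C (((MvPolynomial.eval n p : ℤ) : ℚ)) := by
  have h : (ev1 r).comp (subLine r n)
      = (Polynomial.C : ℚ →+* Polynomial ℚ).comp
          ((Int.castRingHom ℚ).comp (MvPolynomial.eval n)) := by
    apply MvPolynomial.ringHom_ext
    · exact intC_helper r _ _
    · intro j
      simp only [RingHom.comp_apply]
      have h1 : (subLine r n) (MvPolynomial.X j)
          = C ((n j : ℚ)) * X (Sum.inr 0) + X (Sum.inl j) * X (Sum.inr 1) := by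
        simp [subLine]
      rw [h1]
      simp only [ev1, map_add, map_mul, coe_eval₂Hom, eval₂_C, eval₂_X]
      simp
  exact RingHom.congr_fun h p

lemma ev1_psiTinv_map (w : Polynomial ℚ) :
    ev1 r (psiTinv r (w.map MvPolynomial.C)) = w := by
  have h : ((ev1 r).comp (psiTinv r)).comp (Polynomial.mapRingHom MvPolynomial.C)
      = RingHom.id (Polynomial ℚ) := by
    apply Polynomial.ringHom_ext
    · intro a; simp [psiTinv, toRT, ev1]
    · simp [psiTinv, toRT, ev1]
  exact RingHom.congr_fun h w

/-- Core lemma: common divisors of the `subLine`-images are nonzero constants. -/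
lemma L1 {s : ℕ} (n : Fin r → ℤ) (P : Fin s → MvPolynomial (Fin r) ℤ)
    (hcop : ∀ D : MvPolynomial (Fin r) ℚ,
      (∀ i, D ∣ (P i).map (Int.castRingHom ℚ)) → D.totalDegree = 0)
    (i₀ : Fin s) (hn : MvPolynomial.eval n (P i₀) ≠ 0)
    (D : Rr r) (hD : ∀ i, D ∣ subLine r n (P i)) :
    ∃ c : ℚ, c ≠ 0 ∧ D = MvPolynomial.C c := by
  classical
  have hq0 : (P i₀).map (Int.castRingHom ℚ) ≠ 0 := by
    intro h
    have h2 : P i₀ = 0 := MvPolynomial.map_injective (Int.castRingHom ℚ) Int.cast_injective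
      (by rw [h]; simp)
    rw [h2] at hn; simp at hn
  -- Step 1: for every nonzero λ, `p.eval (C λ)` is a constant, where `p = psiT D`.
  set p := psiT r D with hp
  have hconst : ∀ l : ℚ, l ≠ 0 → ∃ c : ℚ, p.eval (MvPolynomial.C l) = MvPolynomial.C c := by
    intro l hl
    have hE : ∀ i, thetaL r n l D
        ∣ (rename Sum.inl ((P i).map (Int.castRingHom ℚ)) : Rr r) := fun i => by
      rw [← thetaL_subLine r n hl (P i)]
      exact map_dvd _ (hD i)
    obtain ⟨c, hc, hDc⟩ := lemB r i₀ hq0 hcop hE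
    refine ⟨c, ?_⟩
    have h1 : phiL r l D = MvPolynomial.C c := by
      have h2 := RingHom.congr_fun (betaLinv_thetaL r n hl) D
      simp only [RingHom.comp_apply] at h2
      rw [← h2, hDc]
      simp [betaLinv]
    have h2 := RingHom.congr_fun (phiL_eval r l) D
    simp only [RingHom.comp_apply, Polynomial.coe_evalRingHom] at h2
    rw [h1] at h2
    rw [← hp] at h2
    apply toRT_injective r
    rw [h2]
    simp [toRT]
  -- Step 2: all coefficients of `p` are constants.
  have key : ∀ k, p.coeff k = MvPolynomial.C (MvPolynomial.coeff 0 (p.coeff k)) := by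
    have hm0 : ∀ m : (Fin r ⊕ Fin 1) →₀ ℕ, m ≠ 0 → ∀ k,
        MvPolynomial.coeff m (p.coeff k) = 0 := by
      intro m hm
      set F : Polynomial ℚ := ∑ k ∈ p.support,
        Polynomial.C (MvPolynomial.coeff m (p.coeff k)) * Polynomial.X ^ k with hF
      have hevalF : ∀ l : ℚ, l ≠ 0 → F.eval l = 0 := by
        intro l hl
        obtain ⟨c, hpc⟩ := hconst l hl
        have hR : MvPolynomial.coeff m (p.eval (MvPolynomial.C l))
            = ∑ k ∈ p.support, MvPolynomial.coeff m (p.coeff k) * l ^ k := by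
          rw [Polynomial.eval_eq_sum, Polynomial.sum_def, MvPolynomial.coeff_sum]
          apply Finset.sum_congr rfl
          intro k _
          rw [← map_pow, mul_comm (p.coeff k), MvPolynomial.coeff_C_mul, mul_comm]
        have hL : F.eval l = ∑ k ∈ p.support, MvPolynomial.coeff m (p.coeff k) * l ^ k := by
          rw [hF, Polynomial.eval_finset_sum]
          simp
        rw [hL, ← hR, hpc, MvPolynomial.coeff_C, if_neg (fun h => hm h.symm)]
      have hFzero : F = 0 := by
        apply Polynomial.eq_zero_of_infinite_isRoot
        apply Set.Infinite.mono (s := {x : ℚ | x ≠ 0})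
        · intro x hx; exact hevalF x hx
        · exact Set.Finite.infinite_compl (Set.finite_singleton 0)
      intro k
      by_cases hk : k ∈ p.support
      · have hco : F.coeff k = MvPolynomial.coeff m (p.coeff k) := by
          rw [hF, Polynomial.finset_sum_coeff]
          rw [Finset.sum_eq_single k]
          · simp
          · intro b _ hb
            rw [Polynomial.coeff_C_mul, Polynomial.coeff_X_pow, if_neg (fun h => hb h.symm),
              mul_zero]
          · intro h; exact absurd hk h
        rw [← hco, hFzero]; simp
      · rw [Polynomial.notMem_support_iff.mp hk]; simp
    intro k
    ext m
    rw [MvPolynomial.coeff_C]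
    split_ifs with h
    · rw [← h]
    · exact hm0 m (fun hh => h (hh ▸ rfl)) k
  -- Step 3: `D` is the image of a univariate rational polynomial in `t`.
  set q : Polynomial ℚ := ∑ k ∈ p.support,
    Polynomial.C (MvPolynomial.coeff 0 (p.coeff k)) * Polynomial.X ^ k with hqdef
  have hpq : p = q.map MvPolynomial.C := by
    ext k m
    rw [Polynomial.coeff_map]
    by_cases hk : k ∈ p.support
    · have : q.coeff k = MvPolynomial.coeff 0 (p.coeff k) := by
        rw [hqdef, Polynomial.finset_sum_coeff, Finset.sum_eq_single k]
        · simp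
        · intro b _ hb
          rw [Polynomial.coeff_C_mul, Polynomial.coeff_X_pow, if_neg (fun h => hb h.symm),
            mul_zero]
        · intro h; exact absurd hk h
      rw [this, ← key k]
    · have h0 : p.coeff k = 0 := Polynomial.notMem_support_iff.mp hk
      have : q.coeff k = 0 := by
        rw [hqdef, Polynomial.finset_sum_coeff]
        apply Finset.sum_eq_zero
        intro b hb
        have hkb : k ≠ b := fun h => hk (h ▸ hb)
        simp [Polynomial.coeff_X_pow, hkb]
      rw [this, h0]; simp
  have hDq : D = psiTinv r (q.map MvPolynomial.C) := by
    rw [← hpq, hp, psiTinv_psiT]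
  -- Step 4: evaluate at `a = 0, u = 1` to see that `q` is a nonzero constant.
  have hev : ev1 r D = q := by rw [hDq, ev1_psiTinv_map]
  have hc0 : ((MvPolynomial.eval n (P i₀) : ℤ) : ℚ) ≠ 0 := Int.cast_ne_zero.mpr hn
  have hdvd : q ∣ Polynomial.C ((MvPolynomial.eval n (P i₀) : ℤ) : ℚ) := by
    rw [← ev1_subLine r n (P i₀), ← hev]
    exact map_dvd _ (hD i₀)
  obtain ⟨c, _, hcne, hqC⟩ := dvd_C_cases hc0 hdvd
  refine ⟨c, hcne, ?_⟩
  rw [hDq, hqC, Polynomial.map_C]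
  simp [psiTinv, toRT]

set_option synthInstance.maxHeartbeats 1000000 in
set_option maxHeartbeats 3000000 in
/-- Bézout step: a nonzero element `g ∈ Sr` lies in the ideal generated by the `Q i`
(viewing `Rr ≃ Sr[X]` via `Psi`), provided all common divisors of the `Q i` are constants. -/
lemma L2gen {s : ℕ} (Psi : Rr r →+* Polynomial (Sr r)) (PsiInv : Polynomial (Sr r) →+* Rr r)
    (hinv1 : ∀ x, PsiInv (Psi x) = x) (hinv2 : ∀ x, Psi (PsiInv x) = x)
    (hPsiC : ∀ c : ℚ, Psi (MvPolynomial.C c) = Polynomial.C (MvPolynomial.C c))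
    (Q : Fin s → Rr r) (i₀ : Fin s) (hQ0 : Q i₀ ≠ 0)
    (hcom : ∀ D : Rr r, (∀ i, D ∣ Q i) → ∃ c : ℚ, c ≠ 0 ∧ D = MvPolynomial.C c) :
    ∃ (A : Fin s → Rr r) (g : Sr r), g ≠ 0 ∧ ∑ i, A i * Q i = PsiInv (Polynomial.C g) := by
  classical
  letI : NormalizationMonoid (Sr r) := UniqueFactorizationMonoid.normalizationMonoid.toNormalizationMonoid
  letI : NormalizedGCDMonoid (Sr r) := UniqueFactorizationMonoid.toNormalizedGCDMonoid (Sr r)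
  set K := FractionRing (Sr r) with hK
  set algK : Sr r →+* K := algebraMap (Sr r) K with halgK
  have halginj : Function.Injective algK := IsFractionRing.injective (Sr r) K
  set QS : Fin s → Polynomial (Sr r) := fun i => Psi (Q i) with hQS
  set QK : Fin s → Polynomial K := fun i => (QS i).map algK with hQK
  have hmapinj : Function.Injective (Polynomial.map algK) := Polynomial.map_injective _ halginj
  have hQSne : QS i₀ ≠ 0 := by
    intro h
    apply hQ0
    rw [← hinv1 (Q i₀)]
    show PsiInv (QS i₀) = 0
    rw [h, map_zero]
  have hQKne : QK i₀ ≠ 0 := by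
    intro h
    apply hQSne
    apply hmapinj
    rw [hQK] at h
    simpa using h
  have htop : Ideal.span (Set.range QK) = ⊤ := by
    by_contra htop
    obtain ⟨d, hd⟩ := (IsPrincipalIdealRing.principal (Ideal.span (Set.range QK))).principal
    have hdvd : ∀ i, d ∣ QK i := fun i => by
      have hmem : QK i ∈ Ideal.span (Set.range QK) :=
        Ideal.subset_span (Set.mem_range_self i)
      rw [hd] at hmem
      obtain ⟨a, ha⟩ := Submodule.mem_span_singleton.mp hmem
      exact ⟨a, by rw [← ha, smul_eq_mul, mul_comm]⟩
    have hdne : d ≠ 0 := by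
      rintro rfl
      exact hQKne (zero_dvd_iff.mp (hdvd i₀))
    have hdnu : ¬ IsUnit d := fun hu =>
      htop (by rw [hd]; exact Ideal.span_singleton_eq_top.mpr hu)
    set D0 : Polynomial (Sr r) :=
      IsLocalization.integerNormalization (nonZeroDivisors (Sr r)) d with hD0
    obtain ⟨bb, hbb⟩ :=
      IsLocalization.integerNormalization_map_to_map (nonZeroDivisors (Sr r)) d
    have hbbK : (D0.map algK) = Polynomial.C (algK ((bb : Sr r))) * d := by
      rw [hD0, hbb]
      ext k
      rw [Polynomial.coeff_smul, Polynomial.coeff_C_mul, Algebra.smul_def]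
      all_goals rfl
    have hD0ne : D0 ≠ 0 := by
      rw [hD0]
      intro h
      exact hdne (IsFractionRing.integerNormalization_eq_zero_iff.mp h)
    set D1 := D0.primPart with hD1
    have hcontne : D0.content ≠ 0 := fun h => hD0ne (Polynomial.content_eq_zero_iff.mp h)
    have hstar : Polynomial.C (algK D0.content) * D1.map algK
        = Polynomial.C (algK ((bb : Sr r))) * d := by
      rw [← hbbK]
      conv_rhs => rw [D0.eq_C_content_mul_primPart]
      rw [Polynomial.map_mul, Polynomial.map_C]
    have hDdvd : ∀ i, D1 ∣ QS i := by
      intro i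
      by_cases hQSi : QS i = 0
      · rw [hQSi]; exact dvd_zero _
      · have hbbne : algK ((bb : Sr r)) ≠ 0 := fun h =>
          nonZeroDivisors.ne_zero bb.2 (halginj (by rw [h, map_zero]))
        have hubb : IsUnit (Polynomial.C (algK ((bb : Sr r)))) :=
          Polynomial.isUnit_C.mpr (isUnit_iff_ne_zero.mpr hbbne)
        have h2 : D1.map algK ∣ Polynomial.C (algK ((bb : Sr r))) * d :=
          ⟨Polynomial.C (algK D0.content), by rw [← hstar]; ring⟩
        have h3 : Polynomial.C (algK ((bb : Sr r))) * d ∣ QK i := by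
          rw [mul_comm, ← hubb.unit_spec]
          exact (Units.mul_right_dvd).mpr (hdvd i)
        have h1 : D1.map algK ∣ QK i := dvd_trans h2 h3
        have hQKfact : QK i = Polynomial.C (algK (QS i).content)
            * ((QS i).primPart.map algK) := by
          show (QS i).map algK = _
          conv_lhs => rw [(QS i).eq_C_content_mul_primPart]
          rw [Polynomial.map_mul, Polynomial.map_C]
        have hcQS : algK (QS i).content ≠ 0 := fun h =>
          hQSi (Polynomial.content_eq_zero_iff.mp
            (halginj (by rw [h, map_zero])))
        have hu2 : IsUnit (Polynomial.C (algK (QS i).content)) :=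
          Polynomial.isUnit_C.mpr (isUnit_iff_ne_zero.mpr hcQS)
        have h5 : D1.map algK ∣ (QS i).primPart.map algK := by
          rw [hQKfact, ← hu2.unit_spec] at h1
          exact (Units.dvd_mul_left).mp h1
        have h6 : D1 ∣ (QS i).primPart :=
          Polynomial.IsPrimitive.dvd_of_fraction_map_dvd_fraction_map
            (Polynomial.isPrimitive_primPart D0) h5
        exact dvd_trans h6 ((QS i).primPart_dvd)
    have hDdvdQ : ∀ i, PsiInv D1 ∣ Q i := fun i => by
      have h8 := map_dvd PsiInv (hDdvd i)
      simp only [hQS] at h8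
      rw [hinv1] at h8
      exact h8
    obtain ⟨c, hc, hDc⟩ := hcom (PsiInv D1) hDdvdQ
    have hD1C : D1 = Polynomial.C (MvPolynomial.C c) := by
      have h7 := congrArg Psi hDc
      rw [hinv2 D1, hPsiC] at h7
      exact h7
    have hCcne : (MvPolynomial.C c : Sr r) ≠ 0 := fun h => hc (by simpa using h)
    have hxne : algK D0.content * algK (MvPolynomial.C c) ≠ 0 :=
      mul_ne_zero (fun h => hcontne (halginj (by rw [h, map_zero])))
        (fun h => hCcne (halginj (by rw [h, map_zero])))
    have hdC : d ∣ Polynomial.C (algK D0.content * algK (MvPolynomial.C c)) := by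
      have h9 := hstar
      rw [hD1C, Polynomial.map_C] at h9
      exact ⟨Polynomial.C (algK ((bb : Sr r))),
        by rw [Polynomial.C_mul, h9, mul_comm]⟩
    exact hdnu (isUnit_of_dvd_unit hdC (Polynomial.isUnit_C.mpr (isUnit_iff_ne_zero.mpr hxne)))
  -- Bézout identity and clearing denominators
  have h1 : (1 : Polynomial K) ∈ Ideal.span (Set.range QK) := htop ▸ Submodule.mem_top
  rw [Ideal.span, Submodule.mem_span_range_iff_exists_fun] at h1
  obtain ⟨f, hf⟩ := h1
  simp only [smul_eq_mul] at hf
  have hIN := fun i =>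
    IsLocalization.integerNormalization_map_to_map (nonZeroDivisors (Sr r)) (f i)
  choose b hb using hIN
  set F : Fin s → Polynomial (Sr r) := fun i =>
    IsLocalization.integerNormalization (nonZeroDivisors (Sr r)) (f i) with hF
  set B : Sr r := ∏ i, ((b i : Sr r)) with hB
  have hBne : B ≠ 0 := by
    rw [hB]
    apply Finset.prod_ne_zero_iff.mpr
    intro i _
    exact nonZeroDivisors.ne_zero (b i).2
  set G : Fin s → Polynomial (Sr r) := fun i =>
    Polynomial.C (∏ j ∈ Finset.univ.erase i, ((b j : Sr r))) * F i with hG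
  have hkey : ∀ i, (F i).map algK = Polynomial.C (algK ((b i : Sr r))) * f i := by
    intro i
    rw [hF, hb i]
    ext k
    rw [Polynomial.coeff_smul, Polynomial.coeff_C_mul, Algebra.smul_def]
    all_goals rfl
  have hterm : ∀ i, (G i * QS i).map algK = Polynomial.C (algK B) * (f i * QK i) := by
    intro i
    rw [Polynomial.map_mul]
    simp only [hG]
    rw [Polynomial.map_mul, Polynomial.map_C, hkey i, ← mul_assoc, ← Polynomial.C_mul,
      ← map_mul, Finset.prod_erase_mul _ _ (Finset.mem_univ i)]
    rw [← hB, mul_assoc]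
  have hmain : ∑ i, G i * QS i = Polynomial.C B := by
    apply hmapinj
    rw [Polynomial.map_C, ← Polynomial.coe_mapRingHom, map_sum]
    simp only [Polynomial.coe_mapRingHom]
    rw [Finset.sum_congr rfl (fun i _ => hterm i), ← Finset.mul_sum, hf, mul_one]
  refine ⟨fun i => PsiInv (G i), B, hBne, ?_⟩
  have := congrArg PsiInv hmain
  rw [map_sum] at this
  simpa only [map_mul, hQS, hinv1] using this

/-- Evaluation `a_j ↦ a*_j` (integer point), `u ↦ X 0`, `t ↦ X 1`. -/
def evA (a : Fin r → ℤ) : Rr r →+* MvPolynomial (Fin 2) ℚ :=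
  eval₂Hom MvPolynomial.C
    (Sum.elim (fun j => MvPolynomial.C ((a j : ℚ))) (fun k => X k))

def iot0 : Polynomial ℚ →+* MvPolynomial (Fin 2) ℚ :=
  Polynomial.eval₂RingHom MvPolynomial.C (X 0)

def iot1 : Polynomial ℚ →+* MvPolynomial (Fin 2) ℚ :=
  Polynomial.eval₂RingHom MvPolynomial.C (X 1)

lemma evA_subLine (n a : Fin r → ℤ) (p : MvPolynomial (Fin r) ℤ) :
    evA r a (subLine r n p) = subLineAt r n a p := by
  have h : (evA r a).comp (subLine r n) = subLineAt r n a := by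
    apply MvPolynomial.ringHom_ext
    · exact intC_helper r _ _
    · intro j; simp [subLine, subLineAt, evA]
  exact RingHom.congr_fun h p

lemma psiTinv_C (y : Sr r) : psiTinv r (Polynomial.C y) = toRT r y := by
  simp [psiTinv]

lemma psiUinv_C (y : Sr r) : psiUinv r (Polynomial.C y) = toRU r y := by
  simp [psiUinv]

lemma evA_toRT (a : Fin r → ℤ) (g : Sr r) :
    evA r a (toRT r g)
      = iot0 ((psiS r g).map (MvPolynomial.eval (fun j => ((a j : ℚ))))) := by
  have h : (evA r a).comp (toRT r)
      = iot0.comp ((Polynomial.mapRingHom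
          (MvPolynomial.eval (fun j => ((a j : ℚ))))).comp (psiS r)) := by
    apply MvPolynomial.ringHom_ext
    · intro b; simp [evA, toRT, psiS, iot0]
    · rintro (j | k)
      · simp [evA, toRT, psiS, iot0]
        rw [← map_intCast (Polynomial.C : ℚ →+* Polynomial ℚ) (a j), Polynomial.eval₂_C]
        simp
      · fin_cases k <;> simp [evA, toRT, psiS, iot0]
  exact RingHom.congr_fun h g

lemma evA_toRU (a : Fin r → ℤ) (g : Sr r) :
    evA r a (toRU r g)
      = iot1 ((psiS r g).map (MvPolynomial.eval (fun j => ((a j : ℚ))))) := by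
  have h : (evA r a).comp (toRU r)
      = iot1.comp ((Polynomial.mapRingHom
          (MvPolynomial.eval (fun j => ((a j : ℚ))))).comp (psiS r)) := by
    apply MvPolynomial.ringHom_ext
    · intro b; simp [evA, toRU, psiS, iot1]
    · rintro (j | k)
      · simp [evA, toRU, psiS, iot1]
        rw [← map_intCast (Polynomial.C : ℚ →+* Polynomial ℚ) (a j), Polynomial.eval₂_C]
        simp
      · fin_cases k <;> simp [evA, toRU, psiS, iot1]
  exact RingHom.congr_fun h g

lemma psi2_iot0 (w : Polynomial ℚ) : psi2 (iot0 w) = Polynomial.C w := by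
  have h : psi2.comp iot0 = (Polynomial.C : Polynomial ℚ →+* _) := by
    apply Polynomial.ringHom_ext
    · intro a; simp [psi2, iot0]
    · simp [psi2, iot0]
  exact RingHom.congr_fun h w

lemma psi2_iot1 (v : Polynomial ℚ) : psi2 (iot1 v) = v.map Polynomial.C := by
  have h : psi2.comp iot1 = Polynomial.mapRingHom (Polynomial.C : ℚ →+* Polynomial ℚ) := by
    apply Polynomial.ringHom_ext
    · intro a; simp [psi2, iot1]
    · simp [psi2, iot1]
  exact RingHom.congr_fun h v

/-- If `D` divides a nonzero polynomial in `u` alone and a nonzero polynomial in `t` alone,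
then `D` is constant. -/
lemma final2 {D : MvPolynomial (Fin 2) ℚ} {w v : Polynomial ℚ} (hw : w ≠ 0) (hv : v ≠ 0)
    (h0 : D ∣ iot0 w) (h1 : D ∣ iot1 v) : D.totalDegree = 0 := by
  have hw' : psi2 D ∣ Polynomial.C w := by rw [← psi2_iot0]; exact map_dvd _ h0
  obtain ⟨d, hdw, hdne, hDC⟩ := dvd_C_cases hw hw'
  have hv' : psi2 D ∣ v.map Polynomial.C := by rw [← psi2_iot1]; exact map_dvd _ h1
  rw [hDC] at hv'
  obtain ⟨E, hE⟩ := hv'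
  have hco : d ∣ Polynomial.C (v.coeff v.natDegree) := by
    refine ⟨E.coeff v.natDegree, ?_⟩
    have h2 := congrArg (fun p => Polynomial.coeff p v.natDegree) hE
    simpa [Polynomial.coeff_map, Polynomial.coeff_C_mul] using h2
  have hlc : v.coeff v.natDegree ≠ 0 := by
    rw [Polynomial.coeff_natDegree]
    exact Polynomial.leadingCoeff_ne_zero.mpr hv
  obtain ⟨c, hcb, hcne, hdc⟩ := dvd_C_cases hlc hco
  have hfin : D = MvPolynomial.C c := by
    have h3 := psi2inv_psi2 D
    rw [hDC, hdc] at h3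
    rw [← h3]
    simp [psi2inv]
  rw [hfin]
  exact totalDegree_C c

lemma psiT_C (c : ℚ) : psiT r (MvPolynomial.C c) = Polynomial.C (MvPolynomial.C c) := by
  simp [psiT]

lemma psiU_C (c : ℚ) : psiU r (MvPolynomial.C c) = Polynomial.C (MvPolynomial.C c) := by
  simp [psiU]

lemma psiS_injective : Function.Injective (psiS r) := by
  intro x y h
  have hx := psiSinv_psiS r x
  have hy := psiSinv_psiS r y
  rw [← hx, ← hy, h]

end

end Stmt17Aux

open Stmt17Aux in
/-- If `P_1,…,P_s ∈ ℤ[x_1,…,x_r]` (`r ≥ 2`) are nonzero coprime polynomials not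
all vanishing at `n`, then the `P_i(u·n + t·a)` are coprime in `ℚ[a,u,t]`;
consequently, off a proper Zariski-closed subset of directions `a*`, the
polynomials `P_i(u·n + t·a*)` are coprime in `ℚ[u,t]`. -/
theorem stmt17 (s r : ℕ) (hs : 2 ≤ s) (hr : 2 ≤ r)
    (P : Fin s → MvPolynomial (Fin r) ℤ)
    (hP : ∀ i, P i ≠ 0)
    (hcop : ∀ D : MvPolynomial (Fin r) ℚ,
      (∀ i, D ∣ (P i).map (Int.castRingHom ℚ)) → D.totalDegree = 0)
    (n : Fin r → ℤ) (hn : ∃ i, eval n (P i) ≠ 0) :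
    (∀ D : MvPolynomial (Fin r ⊕ Fin 2) ℚ,
      (∀ i, D ∣ subLine r n (P i)) → D.totalDegree = 0) ∧
    ∃ G : MvPolynomial (Fin r) ℚ, G ≠ 0 ∧
      ∀ a : Fin r → ℤ, eval (fun j => (a j : ℚ)) G ≠ 0 →
        ∀ D : MvPolynomial (Fin 2) ℚ,
          (∀ i, D ∣ subLineAt r n a (P i)) → D.totalDegree = 0 := by
  classical
  obtain ⟨i₀, hi₀⟩ := hn
  have hcom : ∀ D : MvPolynomial (Fin r ⊕ Fin 2) ℚ,
      (∀ i, D ∣ subLine r n (P i)) → ∃ c : ℚ, c ≠ 0 ∧ D = MvPolynomial.C c :=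
    fun D hD => L1 r n P hcop i₀ hi₀ D hD
  refine ⟨?_, ?_⟩
  · intro D hD
    obtain ⟨c, hc, rfl⟩ := hcom D hD
    exact totalDegree_C c
  have hQ0 : subLine r n (P i₀) ≠ 0 := by
    intro h
    have h2 := ev1_subLine r n (P i₀)
    rw [h, map_zero] at h2
    have hc0 : ((MvPolynomial.eval n (P i₀) : ℤ) : ℚ) ≠ 0 := Int.cast_ne_zero.mpr hi₀
    exact hc0 (by simpa using h2.symm)
  obtain ⟨A, g, hg, hA⟩ := L2gen r (psiT r) (psiTinv r) (psiTinv_psiT r) (psiT_psiTinv r)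
    (psiT_C r) (fun i => subLine r n (P i)) i₀ hQ0 hcom
  obtain ⟨A', gU, hgU, hAU⟩ := L2gen r (psiU r) (psiUinv r) (psiUinv_psiU r) (psiU_psiUinv r)
    (psiU_C r) (fun i => subLine r n (P i)) i₀ hQ0 hcom
  have hgS : psiS r g ≠ 0 := fun hz => hg (by rw [← psiSinv_psiS r g, hz, map_zero])
  have hhS : psiS r gU ≠ 0 := fun hz => hgU (by rw [← psiSinv_psiS r gU, hz, map_zero])
  refine ⟨(psiS r g).leadingCoeff * (psiS r gU).leadingCoeff,
    mul_ne_zero (Polynomial.leadingCoeff_ne_zero.mpr hgS)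
      (Polynomial.leadingCoeff_ne_zero.mpr hhS), ?_⟩
  intro a ha D hD
  rw [map_mul] at ha
  have haG1 : MvPolynomial.eval (fun j => ((a j : ℚ))) (psiS r g).leadingCoeff ≠ 0 :=
    left_ne_zero_of_mul ha
  have haG2 : MvPolynomial.eval (fun j => ((a j : ℚ))) (psiS r gU).leadingCoeff ≠ 0 :=
    right_ne_zero_of_mul ha
  set w := (psiS r g).map (MvPolynomial.eval (fun j => ((a j : ℚ)))) with hwdef
  set v := (psiS r gU).map (MvPolynomial.eval (fun j => ((a j : ℚ)))) with hvdef
  have hwne : w ≠ 0 := by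
    intro hz
    apply haG1
    have h2 := congrArg (fun p => Polynomial.coeff p (psiS r g).natDegree) hz
    simpa [hwdef, Polynomial.coeff_map, Polynomial.coeff_natDegree] using h2
  have hvne : v ≠ 0 := by
    intro hz
    apply haG2
    have h2 := congrArg (fun p => Polynomial.coeff p (psiS r gU).natDegree) hz
    simpa [hvdef, Polynomial.coeff_map, Polynomial.coeff_natDegree] using h2
  have hDw : D ∣ iot0 w := by
    have h1 := congrArg (evA r a) hA
    rw [map_sum, psiTinv_C, evA_toRT] at h1
    have h3 := Finset.dvd_sum (f := fun i => evA r a (A i * subLine r n (P i)))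
      (s := Finset.univ) (fun i _ => by
        show D ∣ evA r a (A i * subLine r n (P i))
        rw [map_mul, evA_subLine]
        exact Dvd.dvd.mul_left (hD i) _)
    rw [h1] at h3
    exact h3
  have hDv : D ∣ iot1 v := by
    have h1 := congrArg (evA r a) hAU
    rw [map_sum, psiUinv_C, evA_toRU] at h1
    have h3 := Finset.dvd_sum (f := fun i => evA r a (A' i * subLine r n (P i)))
      (s := Finset.univ) (fun i _ => by
        show D ∣ evA r a (A' i * subLine r n (P i))
        rw [map_mul, evA_subLine]
        exact Dvd.dvd.mul_left (hD i) _)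
    rw [h1] at h3
    exact h3
  exact final2 hwne hvne hDw hDv
end
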